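/- Let K be a field and let (U, b_U) and (V, b_V) be cochain complexes of K-vector spaces indexed by ℤ (differentials of degree +1). Suppose i : U → V is a chain map that is injective in every degree and induces an isomorphism on cohomology in every degree. Then there exist a chain map p : V → U and a family of linear maps hⁿ : Vⁿ → V^{n−1} such that p ∘ i = id_U, id_V − i ∘ p = b_V ∘ h + h ∘ b_V (in every degree), and moreover h ∘ h = 0, h ∘ i = 0 and p ∘ h = 0. -/

import Mathlib

private def castLinEq {K : Type*} [Field K] (V : ℤ → Type*)
    [∀ n, AddCommGroup (V n)] [∀ n, Module K (V n)] {a b : ℤ} (hab : a = b) :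
    V a ≃ₗ[K] V b := hab ▸ LinearEquiv.refl K (V a)

private theorem castLinEq_conj {K : Type*} [Field K] (V U : ℤ → Type*)
    [∀ n, AddCommGroup (V n)] [∀ n, Module K (V n)]
    [∀ n, AddCommGroup (U n)] [∀ n, Module K (U n)]
    (F : ∀ n : ℤ, V (n + 1) →ₗ[K] U (n + 1)) {a b : ℤ} (hab : a = b)
    (e1 : a + 1 = b + 1) :
    (castLinEq U e1).toLinearMap ∘ₗ (F a) ∘ₗ (castLinEq V e1).symm.toLinearMap = F b := by
  subst hab
  ext v
  rfl

theorem injective_quasi_iso_extends_to_contraction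
    (K : Type*) [Field K]
    (U V : ℤ → Type*)
    [∀ n, AddCommGroup (U n)] [∀ n, Module K (U n)]
    [∀ n, AddCommGroup (V n)] [∀ n, Module K (V n)]
    (bU : ∀ n, U n →ₗ[K] U (n + 1)) (bV : ∀ n, V n →ₗ[K] V (n + 1))
    (hbU : ∀ n, (bU (n + 1)).comp (bU n) = 0)
    (hbV : ∀ n, (bV (n + 1)).comp (bV n) = 0)
    (i : ∀ n, U n →ₗ[K] V n)
    (hi : ∀ n, (bV n).comp (i n) = (i (n + 1)).comp (bU n))
    (hinj : ∀ n, Function.Injective (i n))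
    -- `i` is surjective on cohomology in every degree
    (hsurj : ∀ n, ∀ v : V (n + 1), bV (n + 1) v = 0 →
        ∃ u : U (n + 1), bU (n + 1) u = 0 ∧ ∃ w : V n, v - i (n + 1) u = bV n w)
    -- `i` is injective on cohomology in every degree
    (hker : ∀ n, ∀ u : U (n + 1), bU (n + 1) u = 0 →
        (∃ w : V n, i (n + 1) u = bV n w) → ∃ w' : U n, u = bU n w') :
    ∃ (p : ∀ n, V n →ₗ[K] U n) (h : ∀ n, V (n + 1) →ₗ[K] V n),
      -- `p` is a chain map
      (∀ n, (bU n).comp (p n) = (p (n + 1)).comp (bV n)) ∧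
      -- `p ∘ i = id`
      (∀ n, (p n).comp (i n) = LinearMap.id) ∧
      -- `id − i ∘ p = b_V ∘ h + h ∘ b_V` in every degree
      (∀ n, (LinearMap.id : V (n + 1) →ₗ[K] V (n + 1)) - (i (n + 1)).comp (p (n + 1))
          = (bV n).comp (h n) + (h (n + 1)).comp (bV (n + 1))) ∧
      -- side conditions
      (∀ n, (h n).comp (h (n + 1)) = 0) ∧
      (∀ n, (h n).comp (i (n + 1)) = 0) ∧
      (∀ n, (p n).comp (h n) = 0) := by
  classical
  -- pointwise versions of the complex identities
  have hbVapp : ∀ n (x : V n), bV (n + 1) (bV n x) = 0 := fun n x => by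
    simpa using DFunLike.congr_fun (hbV n) x
  have hiapp : ∀ n (u : U n), bV n (i n u) = i (n + 1) (bU n u) := fun n u => by
    simpa using DFunLike.congr_fun (hi n) u
  -- choose complements E n of (range i n ⊔ ker bV n) in V n
  choose E hE using
    fun n => Submodule.exists_isCompl (LinearMap.range (i n) ⊔ LinearMap.ker (bV n))
  set G : ∀ n : ℤ, Submodule K (V (n + 1)) := fun n => Submodule.map (bV n) (E n) with hGdef
  have hGker : ∀ n, G n ≤ LinearMap.ker (bV (n + 1)) := by
    intro n x hx
    obtain ⟨e, _, rfl⟩ := hx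
    exact LinearMap.mem_ker.2 (hbVapp n e)
  have hEzero : ∀ n (e : V n), e ∈ E n → bV n e = 0 → e = 0 := by
    intro n e he h0
    have hd : Disjoint (LinearMap.ker (bV n)) (E n) := (hE n).disjoint.mono_left le_sup_right
    exact Submodule.disjoint_def.mp hd e (LinearMap.mem_ker.2 h0) he
  -- key exactness fact: range i ⊔ G = range i ⊔ ker bV in degree n+1
  have hIker : ∀ n, LinearMap.range (i (n + 1)) ⊔ G n
      = LinearMap.range (i (n + 1)) ⊔ LinearMap.ker (bV (n + 1)) := by
    intro n
    refine le_antisymm (sup_le le_sup_left ((hGker n).trans le_sup_right))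
      (sup_le le_sup_left ?_)
    intro v hv
    obtain ⟨u, hu0, w, hw⟩ := hsurj n v (LinearMap.mem_ker.1 hv)
    have hwmem : w ∈ (LinearMap.range (i n) ⊔ LinearMap.ker (bV n)) ⊔ E n := by
      rw [(hE n).sup_eq_top]; trivial
    obtain ⟨s, hs, e, he, hse⟩ := Submodule.mem_sup.1 hwmem
    obtain ⟨x', hx', k, hk, hxk⟩ := Submodule.mem_sup.1 hs
    obtain ⟨x, rfl⟩ := hx'
    refine Submodule.mem_sup.2
      ⟨i (n + 1) (u + bU n x), ⟨u + bU n x, rfl⟩, bV n e, ⟨e, he, rfl⟩, ?_⟩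
    have hv' : v = i (n + 1) u + bV n w := by rw [← hw]; abel
    rw [hv', ← hse, ← hxk, map_add, map_add, map_add, hiapp n x, LinearMap.mem_ker.1 hk]
    abel
  -- range i and G are disjoint (injectivity on cohomology)
  have hdisjIG : ∀ n, Disjoint (LinearMap.range (i (n + 1))) (G n) := by
    intro n
    rw [Submodule.disjoint_def]
    rintro x ⟨u, rfl⟩ ⟨e, he, hx⟩
    have h0 : bU (n + 1) u = 0 := by
      apply hinj (n + 1 + 1)
      rw [map_zero, ← hiapp (n + 1) u, ← hx]
      exact hbVapp n e
    obtain ⟨w', hw'⟩ := hker n u h0 ⟨e, hx.symm⟩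
    have he2 : e ∈ LinearMap.range (i n) ⊔ LinearMap.ker (bV n) := by
      refine Submodule.mem_sup.2
        ⟨i n w', ⟨w', rfl⟩, e - i n w', LinearMap.mem_ker.2 ?_, by abel⟩
      rw [map_sub, hiapp n w', ← hw', hx, sub_self]
    have he0 : e = 0 :=
      Submodule.disjoint_def.mp (hE n).disjoint e he2 he
    rw [← hx, he0, map_zero]
  have hdisjSupE : ∀ n, Disjoint (LinearMap.range (i (n + 1)) ⊔ G n) (E (n + 1)) := by
    intro n; rw [hIker n]; exact (hE (n + 1)).disjoint
  have hsupTop : ∀ n, LinearMap.range (i (n + 1)) ⊔ G n ⊔ E (n + 1) = ⊤ := by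
    intro n; rw [hIker n]; exact (hE (n + 1)).sup_eq_top
  -- decomposition of every element
  have hdec : ∀ n (v : V (n + 1)), ∃ u g e, g ∈ G n ∧ e ∈ E (n + 1)
      ∧ v = i (n + 1) u + g + e := by
    intro n v
    have hv : v ∈ LinearMap.range (i (n + 1)) ⊔ G n ⊔ E (n + 1) := by
      rw [hsupTop n]; trivial
    obtain ⟨s, hs, e, he, hse⟩ := Submodule.mem_sup.1 hv
    obtain ⟨x', hx', g, hg, hxg⟩ := Submodule.mem_sup.1 hs
    obtain ⟨u, rfl⟩ := hx'
    exact ⟨u, g, e, hg, he, by rw [← hse, ← hxg]⟩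
  -- the two complement structures used to define the projections
  have hc1 : ∀ n, IsCompl (LinearMap.range (i (n + 1))) (G n ⊔ E (n + 1)) := by
    intro n
    constructor
    · rw [Submodule.disjoint_def]
      intro x hx hx2
      obtain ⟨g, hg, e, he, hge⟩ := Submodule.mem_sup.1 hx2
      have he0 : e = 0 := by
        refine Submodule.disjoint_def.mp (hdisjSupE n) e ?_ he
        have hxe : e = x - g := by rw [← hge]; abel
        rw [hxe]
        exact Submodule.sub_mem _ (Submodule.mem_sup_left hx) (Submodule.mem_sup_right hg)
      have hxg : x = g := by rw [← hge, he0, add_zero]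
      exact Submodule.disjoint_def.mp (hdisjIG n) x hx (hxg ▸ hg)
    · rw [codisjoint_iff, ← sup_assoc]; exact hsupTop n
  have hc2 : ∀ n, IsCompl (G n) (LinearMap.range (i (n + 1)) ⊔ E (n + 1)) := by
    intro n
    constructor
    · rw [Submodule.disjoint_def]
      intro g hg hg2
      obtain ⟨x, hx, e, he, hxe⟩ := Submodule.mem_sup.1 hg2
      have he0 : e = 0 := by
        refine Submodule.disjoint_def.mp (hdisjSupE n) e ?_ he
        have hxe' : e = g - x := by rw [← hxe]; abel
        rw [hxe']
        exact Submodule.sub_mem _ (Submodule.mem_sup_right hg) (Submodule.mem_sup_left hx)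
      have hgx : g = x := by rw [← hxe, he0, add_zero]
      exact Submodule.disjoint_def.mp (hdisjIG n) g (hgx ▸ hx) hg
    · rw [codisjoint_iff, eq_top_iff, ← hsupTop n]
      exact sup_le (sup_le (le_sup_of_le_right le_sup_left) le_sup_left)
        (le_sup_of_le_right le_sup_right)
  -- construct the edge-indexed retraction P and the homotopy hh
  have main : ∃ (P : ∀ n : ℤ, V (n + 1) →ₗ[K] U (n + 1))
      (hh : ∀ n : ℤ, V (n + 1) →ₗ[K] V n),
      (∀ n (u : U (n + 1)) (g e : V (n + 1)), g ∈ G n → e ∈ E (n + 1) →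
        P n (i (n + 1) u + g + e) = u) ∧
      (∀ n (u : U (n + 1)) (g e : V (n + 1)), g ∈ G n → e ∈ E (n + 1) →
        hh n (i (n + 1) u + g + e) ∈ E n
          ∧ bV n (hh n (i (n + 1) u + g + e)) = g) := by
    have hfE : ∀ n, ∀ x ∈ E n, bV n x ∈ G n := fun n x hx => Submodule.mem_map_of_mem hx
    have hbij : ∀ n, Function.Bijective ((bV n).restrict (hfE n)) := by
      intro n
      constructor
      · intro x y hxy
        apply Subtype.ext
        have hval : bV n (x : V n) = bV n (y : V n) := congrArg Subtype.val hxy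
        have hsub : (x : V n) - y = 0 :=
          hEzero n _ (Submodule.sub_mem _ x.2 y.2) (by rw [map_sub, hval, sub_self])
        exact sub_eq_zero.mp hsub
      · rintro ⟨g, e, he, hge⟩
        exact ⟨⟨e, he⟩, Subtype.ext hge⟩
    refine ⟨fun n => (LinearEquiv.ofInjective (i (n + 1)) (hinj (n + 1))).symm.toLinearMap ∘ₗ
        Submodule.linearProjOfIsCompl _ _ (hc1 n),
      fun n => (E n).subtype ∘ₗ
        (LinearEquiv.ofBijective _ (hbij n)).symm.toLinearMap ∘ₗ
        Submodule.linearProjOfIsCompl _ _ (hc2 n), ?_, ?_⟩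
    · intro n u g e hg he
      have a1 : Submodule.linearProjOfIsCompl _ _ (hc1 n) (i (n + 1) u)
          = ⟨i (n + 1) u, LinearMap.mem_range_self _ u⟩ :=
        Submodule.linearProjOfIsCompl_apply_left (hc1 n)
          ⟨i (n + 1) u, LinearMap.mem_range_self _ u⟩
      have a2 : Submodule.linearProjOfIsCompl _ _ (hc1 n) g = 0 :=
        Submodule.linearProjOfIsCompl_apply_right' (hc1 n) (Submodule.mem_sup_left hg)
      have a3 : Submodule.linearProjOfIsCompl _ _ (hc1 n) e = 0 :=
        Submodule.linearProjOfIsCompl_apply_right' (hc1 n) (Submodule.mem_sup_right he)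
      simp only [LinearMap.comp_apply, map_add, a1, a2, a3, map_zero, add_zero]
      apply hinj (n + 1)
      have hx : (⟨i (n + 1) u, LinearMap.mem_range_self _ u⟩ : LinearMap.range (i (n + 1)))
          = LinearEquiv.ofInjective (i (n + 1)) (hinj (n + 1)) u :=
        Subtype.ext (LinearEquiv.ofInjective_apply (i (n + 1)) u).symm
      rw [hx]
      simp
    · intro n u g e hg he
      have a1 : Submodule.linearProjOfIsCompl _ _ (hc2 n) (i (n + 1) u) = 0 :=
        Submodule.linearProjOfIsCompl_apply_right' (hc2 n)
          (Submodule.mem_sup_left (LinearMap.mem_range_self _ u))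
      have a2 : Submodule.linearProjOfIsCompl _ _ (hc2 n) g = ⟨g, hg⟩ :=
        Submodule.linearProjOfIsCompl_apply_left (hc2 n) ⟨g, hg⟩
      have a3 : Submodule.linearProjOfIsCompl _ _ (hc2 n) e = 0 :=
        Submodule.linearProjOfIsCompl_apply_right' (hc2 n) (Submodule.mem_sup_right he)
      have hb : (bV n).restrict (hfE n)
          ((LinearEquiv.ofBijective _ (hbij n)).symm ⟨g, hg⟩) = ⟨g, hg⟩ :=
        (LinearEquiv.ofBijective _ (hbij n)).apply_symm_apply ⟨g, hg⟩
      have hb2 : bV n (((LinearEquiv.ofBijective _ (hbij n)).symm ⟨g, hg⟩ : E n) : V n) = g := by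
        have := congrArg Subtype.val hb
        rwa [LinearMap.restrict_coe_apply] at this
      simp only [LinearMap.comp_apply, map_add, a1, a2, a3, map_zero, zero_add, add_zero,
        Submodule.subtype_apply]
      exact ⟨Submodule.coe_mem _, hb2⟩
  obtain ⟨P, hh, hPval, hhval⟩ := main
  -- pointwise evaluation lemmas
  have hPi : ∀ n (u : U (n + 1)), P n (i (n + 1) u) = u := by
    intro n u
    have := hPval n u 0 0 (zero_mem _) (zero_mem _)
    simpa using this
  have hPg : ∀ n (g : V (n + 1)), g ∈ G n → P n g = 0 := by
    intro n g hg
    have := hPval n 0 g 0 hg (zero_mem _)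
    simpa using this
  have hPe : ∀ n (e : V (n + 1)), e ∈ E (n + 1) → P n e = 0 := by
    intro n e he
    have := hPval n 0 0 e (zero_mem _) he
    simpa using this
  have hhi' : ∀ n (u : U (n + 1)), hh n (i (n + 1) u) = 0 := by
    intro n u
    have := hhval n u 0 0 (zero_mem _) (zero_mem _)
    simp only [add_zero] at this
    exact hEzero n _ this.1 this.2
  have hhe : ∀ n (e : V (n + 1)), e ∈ E (n + 1) → hh n e = 0 := by
    intro n e he
    have := hhval n 0 0 e (zero_mem _) he
    simp only [map_zero, zero_add, add_zero] at this
    exact hEzero n _ this.1 this.2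
  have hhg : ∀ n (g : V (n + 1)), g ∈ G n → hh n g ∈ E n ∧ bV n (hh n g) = g := by
    intro n g hg
    have := hhval n 0 g 0 hg (zero_mem _)
    simpa using this
  have hhbe : ∀ n (e : V (n + 1)), e ∈ E (n + 1) → hh (n + 1) (bV (n + 1) e) = e := by
    intro n e he
    have hgmem : bV (n + 1) e ∈ G (n + 1) := ⟨e, he, rfl⟩
    obtain ⟨hmem, hval⟩ := hhg (n + 1) (bV (n + 1) e) hgmem
    have h0 : hh (n + 1) (bV (n + 1) e) - e = 0 :=
      hEzero (n + 1) _ (Submodule.sub_mem _ hmem he) (by rw [map_sub, hval, sub_self])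
    exact sub_eq_zero.mp h0
  have hhmem : ∀ n (v : V (n + 1)), hh n v ∈ E n := by
    intro n v
    obtain ⟨u, g, e, hg, he, rfl⟩ := hdec n v
    simp only [map_add, hhi' n u, hhe n e he, zero_add, add_zero]
    exact (hhg n g hg).1
  -- the degree-indexed retraction, by transporting P
  refine ⟨fun m => (castLinEq U (Int.sub_add_cancel m 1)).toLinearMap ∘ₗ (P (m - 1)) ∘ₗ
      (castLinEq V (Int.sub_add_cancel m 1)).symm.toLinearMap, hh, ?_, ?_, ?_, ?_, ?_, ?_⟩
  · -- chain map
    intro n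
    obtain ⟨m, rfl⟩ : ∃ m, n = m + 1 := ⟨n - 1, (Int.sub_add_cancel n 1).symm⟩
    beta_reduce
    rw [castLinEq_conj V U P (Int.add_sub_cancel m 1) (Int.sub_add_cancel (m + 1) 1),
      castLinEq_conj V U P (Int.add_sub_cancel (m + 1) 1) (Int.sub_add_cancel (m + 1 + 1) 1)]
    ext v
    obtain ⟨u, g, e, hg, he, rfl⟩ := hdec m v
    simp only [LinearMap.comp_apply, map_add]
    rw [hPi m u, hPg m g hg, hPe m e he, hiapp (m + 1) u, LinearMap.mem_ker.1 (hGker m hg),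
      map_zero, hPi (m + 1) (bU (m + 1) u), hPg (m + 1) (bV (m + 1) e) ⟨e, he, rfl⟩]
    simp
  · -- p ∘ i = id
    intro n
    obtain ⟨m, rfl⟩ : ∃ m, n = m + 1 := ⟨n - 1, (Int.sub_add_cancel n 1).symm⟩
    beta_reduce
    rw [castLinEq_conj V U P (Int.add_sub_cancel m 1) (Int.sub_add_cancel (m + 1) 1)]
    ext u
    simp only [LinearMap.comp_apply, LinearMap.id_apply]
    exact hPi m u
  · -- homotopy identity
    intro n
    beta_reduce
    rw [castLinEq_conj V U P (Int.add_sub_cancel n 1) (Int.sub_add_cancel (n + 1) 1)]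
    ext v
    obtain ⟨u, g, e, hg, he, rfl⟩ := hdec n v
    simp only [LinearMap.sub_apply, LinearMap.add_apply, LinearMap.comp_apply,
      LinearMap.id_apply, map_add]
    rw [hPi n u, hPg n g hg, hPe n e he, hhi' n u, hhe n e he,
      hiapp (n + 1) u, LinearMap.mem_ker.1 (hGker n hg)]
    simp only [map_zero, add_zero, zero_add, map_add]
    rw [hhi' (n + 1) (bU (n + 1) u), hhbe n e he, (hhg n g hg).2]
    abel
  · -- h ∘ h = 0
    intro n
    ext v
    simp only [LinearMap.comp_apply, LinearMap.zero_apply]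
    rw [hhe n _ (hhmem (n + 1) v)]
  · -- h ∘ i = 0
    intro n
    ext u
    simp only [LinearMap.comp_apply, LinearMap.zero_apply]
    exact hhi' n u
  · -- p ∘ h = 0
    intro n
    obtain ⟨m, rfl⟩ : ∃ m, n = m + 1 := ⟨n - 1, (Int.sub_add_cancel n 1).symm⟩
    beta_reduce
    rw [castLinEq_conj V U P (Int.add_sub_cancel m 1) (Int.sub_add_cancel (m + 1) 1)]
    ext v
    simp only [LinearMap.comp_apply, LinearMap.zero_apply]
    exact hPe m _ (hhmem (m + 1) v)
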